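/- Let A be a 2×2 real matrix with σ₁ = tr A and σ₂ = det A, and let Λ_A be the induced linear endomorphism of the 3-dimensional space of symmetric 2×2 real matrices. Then the (monic) characteristic polynomial of Λ_A equals X³ − (3σ₁/2)·X² + ((σ₁² + 2σ₂)/2)·X − (σ₁σ₂)/2. -/

import Mathlib

open Matrix Polynomial

def symMat (n : ℕ) (𝕜 : Type*) [CommRing 𝕜] : Submodule 𝕜 (Matrix (Fin n) (Fin n) 𝕜) where
  carrier := {W | Wᵀ = W}
  add_mem' := by
    intro a b ha hb
    simp only [Set.mem_setOf_eq, Matrix.transpose_add] at *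
    rw [ha, hb]
  zero_mem' := by simp
  smul_mem' := by
    intro c a ha
    simp only [Set.mem_setOf_eq, Matrix.transpose_smul] at *
    rw [ha]

def Lam {n : ℕ} {𝕜 : Type*} [Field 𝕜] (A : Matrix (Fin n) (Fin n) 𝕜) :
    symMat n 𝕜 →ₗ[𝕜] symMat n 𝕜 :=
  LinearMap.restrict
    ((2 : 𝕜)⁻¹ • (LinearMap.mulLeft 𝕜 Aᵀ + LinearMap.mulRight 𝕜 A))
    (fun W hW => by
      have h : Wᵀ = W := hW
      show ((2 : 𝕜)⁻¹ • (Aᵀ * W + W * A))ᵀ = (2 : 𝕜)⁻¹ • (Aᵀ * W + W * A)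
      simp [Matrix.transpose_add, Matrix.transpose_mul, h, add_comm])

noncomputable section

def symEquiv : symMat 2 ℝ ≃ₗ[ℝ] (Fin 3 → ℝ) :=
  LinearEquiv.ofLinear
    { toFun := fun W => ![W.1 0 0, W.1 1 1, W.1 0 1]
      map_add' := by intro a b; funext i; fin_cases i <;> simp
      map_smul' := by intro c a; funext i; fin_cases i <;> simp }
    { toFun := fun v => ⟨!![v 0, v 2; v 2, v 1], by
        show _ᵀ = _
        ext i j; fin_cases i <;> fin_cases j <;> simp⟩
      map_add' := by
        intro a b; apply Subtype.ext
        ext i j; fin_cases i <;> fin_cases j <;> simp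
      map_smul' := by
        intro c a; apply Subtype.ext
        ext i j; fin_cases i <;> fin_cases j <;> simp }
    (by apply LinearMap.ext; intro v; funext i; fin_cases i <;> simp)
    (by
      apply LinearMap.ext
      rintro ⟨W, hW⟩
      have h10 : W 1 0 = W 0 1 := by
        have := congrFun (congrFun (hW : Wᵀ = W) 0) 1
        simpa [Matrix.transpose_apply] using this
      apply Subtype.ext
      show !![W 0 0, W 0 1; W 0 1, W 1 1] = W
      ext i j; fin_cases i <;> fin_cases j <;> simp [h10])

def symBasis : Module.Basis (Fin 3) ℝ (symMat 2 ℝ) := Module.Basis.ofEquivFun symEquiv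

/-- For a `2 × 2` real matrix `A` with `σ₁ = tr A`, `σ₂ = det A`, the monic
characteristic polynomial of `Λ_A` equals `X³ − (3σ₁/2)X² + ((σ₁² + 2σ₂)/2)X − σ₁σ₂/2`. -/
theorem charpoly_lam_two (A : Matrix (Fin 2) (Fin 2) ℝ) :
    LinearMap.charpoly (Lam A) =
      X ^ 3 - C (3 * A.trace / 2) * X ^ 2
        + C ((A.trace ^ 2 + 2 * A.det) / 2) * X - C (A.trace * A.det / 2) := by
  have hM : LinearMap.toMatrix symBasis symBasis (Lam A) =
      !![A 0 0, 0, A 1 0;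
         0, A 1 1, A 0 1;
         A 0 1 / 2, A 1 0 / 2, (A 0 0 + A 1 1) / 2] := by
    ext i j
    fin_cases i <;> fin_cases j <;>
      simp [LinearMap.toMatrix_apply, symBasis, Lam, symEquiv, LinearMap.restrict_apply,
        Matrix.mul_apply, Matrix.vecMul, dotProduct, Fin.sum_univ_two, Pi.single_apply] <;> ring
  rw [← LinearMap.charpoly_toMatrix (Lam A) symBasis, hM]
  rw [Matrix.charpoly, Matrix.det_fin_three]
  simp only [charmatrix_apply_eq, charmatrix_apply_ne, Matrix.of_apply, Matrix.cons_val', Matrix.cons_val_zero,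
    Matrix.cons_val_one, Matrix.head_cons, Matrix.empty_val', Matrix.cons_val_fin_one,
    Matrix.head_fin_const, Matrix.cons_val_two, Matrix.tail_cons, ne_eq, Fin.reduceEq,
    not_false_eq_true]
  apply Polynomial.funext
  intro x
  simp only [eval_add, eval_sub, eval_mul, eval_pow, eval_neg, eval_X, eval_C]
  have h2 : (2:ℝ) ≠ 0 := two_ne_zero
  rw [Matrix.trace_fin_two, Matrix.det_fin_two]
  field_simp
  ring
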